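/- Suppose the test instance satisfies max_{v ∈ N} λ_v − λ_{c_*} ≤ Δ for some Δ with Δ ≤ Δ_train. Let w : [0, ∞) → ℝ² satisfy ‖w(t)‖ → ∞ and w(t)/‖w(t)‖ → u^* as t → ∞. Define the logits ξ_v(t) = ⟨w(t), x_v⟩ for v ∈ V and the softmax probability p(t) = exp(ξ_{c_*}(t)) / Σ_{v ∈ V} exp(ξ_v(t)). Then ξ_{c_*}(t) − ξ_v(t) → +∞ for every v ≠ c_*, and consequently p(t) → 1 as t → ∞. -/

import Mathlib

open Filter

/-- if ‖w(t)‖ → ∞ and w(t)/‖w(t)‖ → u*, then on a test instance with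
max_{v ∈ N} λ_v − λ_{c⋆} ≤ Δ ≤ Δ_train, every logit gap ξ_{c⋆}(t) − ξ_v(t) → +∞ and
the softmax probability of c⋆ tends to 1. -/
theorem stmt18 {τ : Type*} [DecidableEq τ]
    (lamStar ΔTrain : ℝ)
    (hlamStar0 : 0 < lamStar) (hlamStar1 : lamStar ≤ 1)
    (hΔTrain0 : 0 ≤ ΔTrain) (hΔTrain1 : ΔTrain ≤ 1)
    (ρ : ℝ) (hρ : ρ = lamStar + ΔTrain)
    (ustar : ℝ × ℝ)
    (hustar : ustar = (1 / Real.sqrt (1 + ρ ^ 2), ρ / Real.sqrt (1 + ρ ^ 2)))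
    (Vt Nt : Finset τ) (hsub : Nt ⊆ Vt)
    (c1 c2 cstar cperp : τ)
    (hc1 : c1 ∈ Vt) (hc2 : c2 ∈ Vt) (hc12 : c1 ≠ c2)
    (hpair : ({cstar, cperp} : Finset τ) = {c1, c2})
    (hstar : cstar ∈ Nt) (hperp : cperp ∉ Nt)
    (lam : τ → ℝ)
    (hlampos : ∀ v ∈ Nt, 0 < lam v) (hlamle : ∀ v : τ, lam v ≤ 1)
    (hlamzero : ∀ v : τ, v ∉ Nt → lam v = 0)
    (x : τ → ℝ × ℝ)
    (hx : ∀ v : τ, x v = (lam v, if v = c1 ∨ v = c2 then 1 else 0))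
    (Δ : ℝ) (hΔle : Δ ≤ ΔTrain)
    (hmax : ∀ v ∈ Nt, lam v - lam cstar ≤ Δ)
    (w : ℝ → ℝ × ℝ)
    (hnorm : Tendsto (fun t => Real.sqrt ((w t).1 ^ 2 + (w t).2 ^ 2)) atTop atTop)
    (hdir : Tendsto (fun t => (Real.sqrt ((w t).1 ^ 2 + (w t).2 ^ 2))⁻¹ • w t)
      atTop (nhds ustar))
    (ξ : τ → ℝ → ℝ)
    (hξ : ∀ v t, ξ v t = (w t).1 * (x v).1 + (w t).2 * (x v).2) :
    (∀ v ∈ Vt, v ≠ cstar → Tendsto (fun t => ξ cstar t - ξ v t) atTop atTop)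
    ∧ Tendsto (fun t => Real.exp (ξ cstar t) / ∑ v ∈ Vt, Real.exp (ξ v t))
        atTop (nhds 1) := by

  have hs : (0:ℝ) < Real.sqrt (1 + ρ ^ 2) := Real.sqrt_pos.2 (by nlinarith)
  have hcstar_mem : cstar = c1 ∨ cstar = c2 := by
    have h : cstar ∈ ({c1, c2} : Finset τ) := by
      rw [← hpair]; simp
    simpa using h
  have hcstarV : cstar ∈ Vt := hcstar_mem.elim (fun h => h ▸ hc1) (fun h => h ▸ hc2)
  have hlamc : 0 < lam cstar := hlampos _ hstar
  have hρpos : 0 < ρ := by rw [hρ]; linarith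
  set r : ℝ → ℝ := fun t => Real.sqrt ((w t).1 ^ 2 + (w t).2 ^ 2) with hr
  have gaps : ∀ v ∈ Vt, v ≠ cstar → Tendsto (fun t => ξ cstar t - ξ v t) atTop atTop := by
    intro v hv hne
    set a : ℝ := (x cstar).1 - (x v).1 with hadef
    set b : ℝ := (x cstar).2 - (x v).2 with hbdef
    have ha : a = lam cstar - lam v := by simp [hadef, hx]
    have hab : 0 < a + ρ * b := by
      by_cases hvc : v = c1 ∨ v = c2
      · have hvperp : v = cperp := by
          have h : v ∈ ({cstar, cperp} : Finset τ) := by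
            rw [hpair]; simp [hvc]
          simp only [Finset.mem_insert, Finset.mem_singleton] at h
          tauto
        have hb : b = 0 := by simp [hbdef, hx, hvc, hcstar_mem]
        have hlv : lam v = 0 := hlamzero _ (by rw [hvperp]; exact hperp)
        rw [ha, hb, hlv]; simpa using hlamc
      · have hb : b = 1 := by simp [hbdef, hx, hvc, hcstar_mem]
        by_cases hvN : v ∈ Nt
        · have h := hmax v hvN
          rw [ha, hb, hρ]; linarith
        · have hlv := hlamzero _ hvN
          rw [ha, hb, hlv]; linarith
    have hC : 0 < ustar.1 * a + ustar.2 * b := by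
      have heq : ustar.1 * a + ustar.2 * b = (a + ρ * b) / Real.sqrt (1 + ρ ^ 2) := by
        rw [hustar]; field_simp
      rw [heq]; exact div_pos hab hs
    have hdir1 : Tendsto (fun t => (r t)⁻¹ * (w t).1) atTop (nhds ustar.1) := by
      have := (continuous_fst.tendsto ustar).comp hdir
      simpa [Prod.smul_fst, smul_eq_mul, Function.comp_def, hr] using this
    have hdir2 : Tendsto (fun t => (r t)⁻¹ * (w t).2) atTop (nhds ustar.2) := by
      have := (continuous_snd.tendsto ustar).comp hdir
      simpa [Prod.smul_snd, smul_eq_mul, Function.comp_def, hr] using this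
    have hg : Tendsto (fun t => (r t)⁻¹ * (w t).1 * a + (r t)⁻¹ * (w t).2 * b)
        atTop (nhds (ustar.1 * a + ustar.2 * b)) :=
      (hdir1.mul_const a).add (hdir2.mul_const b)
    have hmul : Tendsto (fun t => r t * ((r t)⁻¹ * (w t).1 * a + (r t)⁻¹ * (w t).2 * b))
        atTop atTop := Tendsto.atTop_mul_pos hC hnorm hg
    refine hmul.congr' ?_
    filter_upwards [hnorm.eventually_ge_atTop 1] with t ht
    have hrpos : (0:ℝ) < r t := lt_of_lt_of_le one_pos ht
    have hrne : r t ≠ 0 := ne_of_gt hrpos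
    have : ξ cstar t - ξ v t = (w t).1 * a + (w t).2 * b := by
      rw [hξ, hξ, hadef, hbdef]; ring
    rw [this]
    field_simp
  refine ⟨gaps, ?_⟩
  have hsum : Tendsto (fun t => ∑ v ∈ Vt, Real.exp (ξ v t - ξ cstar t)) atTop (nhds 1) := by
    have h1 : (1:ℝ) = ∑ v ∈ Vt, (if v = cstar then (1:ℝ) else 0) := by
      rw [Finset.sum_ite_eq' Vt cstar (fun _ => (1:ℝ))]
      simp [hcstarV]
    rw [h1]
    apply tendsto_finset_sum
    intro v hvV
    by_cases hvc : v = cstar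
    · subst hvc; simpa using (tendsto_const_nhds : Tendsto (fun _ : ℝ => (1:ℝ)) atTop _)
    · simp only [if_neg hvc]
      have hg := gaps v hvV hvc
      have hbot : Tendsto (fun t => ξ v t - ξ cstar t) atTop atBot := by
        have := tendsto_neg_atTop_atBot.comp hg
        have heq : (Neg.neg ∘ fun t => ξ cstar t - ξ v t) = fun t => ξ v t - ξ cstar t := by
          funext t; simp [Function.comp, neg_sub]
        rwa [heq] at this
      exact Real.tendsto_exp_atBot.comp hbot
  have hp : ∀ t, Real.exp (ξ cstar t) / ∑ v ∈ Vt, Real.exp (ξ v t)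
      = (∑ v ∈ Vt, Real.exp (ξ v t - ξ cstar t))⁻¹ := by
    intro t
    rw [Finset.sum_congr rfl (fun v _ => Real.exp_sub (ξ v t) (ξ cstar t)),
      ← Finset.sum_div, inv_div]
  have hfin : Tendsto (fun t => (∑ v ∈ Vt, Real.exp (ξ v t - ξ cstar t))⁻¹)
      atTop (nhds 1) := by
    have := hsum.inv₀ one_ne_zero
    simpa using this
  simpa only [hp] using hfin
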